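/- Let N ≥ 2, α ∈ (0,1), λ > 0, and k ∈ ℕ^{N-1}. Define e_k : ℝ^{N-1} → ℝ by e_k(s) = ∏_{i=1}^{N-1} cos(k_i s_i). Then for every s ∈ ℝ^{N-1}, ∫_{ℝ^{N-1}} e_k(s−t) (|t|² + 4λ²)^{−(N+α)/2} dt = e_k(s) · ∫_{ℝ^{N-1}} e_k(t) (|t|² + 4λ²)^{−(N+α)/2} dt, both integrals being absolutely convergent. -/

import Mathlib

open MeasureTheory Real Filter Topology

noncomputable section

abbrev ES (m : ℕ) : Type := EuclideanSpace ℝ (Fin (m + 1))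

/-- `e_k(s) = ∏ᵢ cos(kᵢ sᵢ)`. -/
def ek {m : ℕ} (k : Fin (m + 1) → ℕ) (s : ES m) : ℝ :=
  ∏ i, Real.cos ((k i : ℝ) * s i)

/-- Auxiliary function interpolating between `e_k(s - t)` and `e_k(s) e_k(t)`. -/
def gaux {m : ℕ} (k : Fin (m + 1) → ℕ) (s : ES m) (A : Finset (Fin (m + 1))) (t : ES m) : ℝ :=
  (∏ i ∈ A, Real.cos ((k i : ℝ) * s i) * Real.cos ((k i : ℝ) * t i)) *
    ∏ i ∈ Aᶜ, Real.cos ((k i : ℝ) * (s i - t i))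

/-- Reflection of the `j`-th coordinate, as a linear isometry equivalence. -/
def flipj {m : ℕ} (j : Fin (m + 1)) : ES m ≃ₗᵢ[ℝ] ES m :=
  LinearIsometryEquiv.piLpCongrRight 2
    (fun i => if i = j then (LinearIsometryEquiv.neg ℝ (E := ℝ)) else .refl ℝ ℝ)

lemma flipj_apply {m : ℕ} (j i : Fin (m + 1)) (t : ES m) :
    flipj j t i = if i = j then -(t i) else t i := by
  simp only [flipj, LinearIsometryEquiv.piLpCongrRight_apply]
  by_cases h : i = j
  · subst h; simp [PiLp.toLp_apply]
  · simp [h, PiLp.toLp_apply]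

lemma abs_cosprod_le_one {m : ℕ} (A : Finset (Fin (m + 1))) (f : Fin (m + 1) → ℝ) :
    |∏ i ∈ A, Real.cos (f i)| ≤ 1 := by
  rw [Finset.abs_prod]
  exact Finset.prod_le_one (fun i _ => abs_nonneg _) (fun i _ => Real.abs_cos_le_one _)

lemma abs_gaux_le_one {m : ℕ} (k : Fin (m + 1) → ℕ) (s : ES m) (A : Finset (Fin (m + 1)))
    (t : ES m) : |gaux k s A t| ≤ 1 := by
  rw [gaux, abs_mul]
  have h1 : |∏ i ∈ A, Real.cos ((k i : ℝ) * s i) * Real.cos ((k i : ℝ) * t i)| ≤ 1 := by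
    rw [Finset.abs_prod]
    refine Finset.prod_le_one (fun i _ => abs_nonneg _) (fun i _ => ?_)
    rw [abs_mul]
    exact mul_le_one₀ (Real.abs_cos_le_one _) (abs_nonneg _) (Real.abs_cos_le_one _)
  have h2 := abs_cosprod_le_one Aᶜ (fun i => (k i : ℝ) * (s i - t i))
  exact mul_le_one₀ h1 (abs_nonneg _) h2

lemma continuous_gaux {m : ℕ} (k : Fin (m + 1) → ℕ) (s : ES m) (A : Finset (Fin (m + 1))) :
    Continuous (gaux k s A) := by
  unfold gaux
  have hcoord : ∀ i : Fin (m + 1), Continuous (fun t : ES m => t i) := by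
    intro i
    exact (EuclideanSpace.proj (𝕜 := ℝ) i).continuous
  refine Continuous.mul ?_ ?_
  · exact continuous_finset_prod _ fun i _ =>
      continuous_const.mul (Real.continuous_cos.comp (continuous_const.mul (hcoord i)))
  · exact continuous_finset_prod _ fun i _ =>
      Real.continuous_cos.comp (continuous_const.mul (continuous_const.sub (hcoord i)))

lemma gaux_flip_add {m : ℕ} (k : Fin (m + 1) → ℕ) (s : ES m) {A : Finset (Fin (m + 1))}
    {j : Fin (m + 1)} (hj : j ∉ A) (t : ES m) :
    gaux k s A t + gaux k s A (flipj j t) = 2 * gaux k s (insert j A) t := by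
  classical
  have hjc : j ∈ Aᶜ := Finset.mem_compl.mpr hj
  set P : ℝ := ∏ i ∈ A, Real.cos ((k i : ℝ) * s i) * Real.cos ((k i : ℝ) * t i) with hP
  set Q : ℝ := ∏ i ∈ Aᶜ.erase j, Real.cos ((k i : ℝ) * (s i - t i)) with hQ
  have eA : gaux k s A t = P * (Real.cos ((k j : ℝ) * (s j - t j)) * Q) := by
    rw [gaux, ← Finset.mul_prod_erase _ _ hjc]
  have eB : gaux k s A (flipj j t) = P * (Real.cos ((k j : ℝ) * (s j + t j)) * Q) := by
    rw [gaux, ← Finset.mul_prod_erase _ _ hjc]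
    congr 1
    · refine Finset.prod_congr rfl fun i hi => ?_
      rw [flipj_apply, if_neg (fun h : i = j => hj (h ▸ hi))]
    · congr 1
      · rw [flipj_apply, if_pos rfl, sub_neg_eq_add]
      · refine Finset.prod_congr rfl fun i hi => ?_
        rw [flipj_apply, if_neg (Finset.ne_of_mem_erase hi)]
  have eI : gaux k s (insert j A) t
      = (Real.cos ((k j : ℝ) * s j) * Real.cos ((k j : ℝ) * t j) * P) * Q := by
    rw [gaux, Finset.prod_insert hj, Finset.compl_insert]
  have hcos : Real.cos ((k j : ℝ) * (s j - t j)) + Real.cos ((k j : ℝ) * (s j + t j))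
      = 2 * (Real.cos ((k j : ℝ) * s j) * Real.cos ((k j : ℝ) * t j)) := by
    rw [mul_sub, mul_add, Real.cos_sub, Real.cos_add]
    ring
  rw [eA, eB, eI]
  linear_combination (P * Q) * hcos

/-- `∫ e_k(s-t)(|t|²+4λ²)^{-(N+α)/2} dt = e_k(s) ∫ e_k(t)(|t|²+4λ²)^{-(N+α)/2} dt`,
both integrals being absolutely convergent.  Here `N = m + 2 ≥ 2`. -/
theorem statement_4 (m : ℕ) (α lam : ℝ) (hα : α ∈ Set.Ioo (0 : ℝ) 1) (hlam : 0 < lam)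
    (k : Fin (m + 1) → ℕ) (s : ES m) :
    Integrable (fun t : ES m =>
        ek k (s - t) * (‖t‖ ^ 2 + 4 * lam ^ 2) ^ (-(((m : ℝ) + 2 + α) / 2))) ∧
      Integrable (fun t : ES m =>
        ek k t * (‖t‖ ^ 2 + 4 * lam ^ 2) ^ (-(((m : ℝ) + 2 + α) / 2))) ∧
      ∫ t : ES m, ek k (s - t) * (‖t‖ ^ 2 + 4 * lam ^ 2) ^ (-(((m : ℝ) + 2 + α) / 2))
        = ek k s * ∫ t : ES m, ek k t * (‖t‖ ^ 2 + 4 * lam ^ 2) ^ (-(((m : ℝ) + 2 + α) / 2)) := by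
  classical
  obtain ⟨hα0, hα1⟩ := hα
  set p : ℝ := ((m : ℝ) + 2 + α) / 2 with hp
  have hppos : 0 < p := by positivity
  set w : ES m → ℝ := fun t => (‖t‖ ^ 2 + 4 * lam ^ 2) ^ (-p) with hw
  have hbase : ∀ t : ES m, 0 < ‖t‖ ^ 2 + 4 * lam ^ 2 := fun t => by positivity
  have hw_cont : Continuous w := by
    refine Continuous.rpow_const ?_ fun t => Or.inl (ne_of_gt (hbase t))
    exact ((continuous_norm.pow 2).add continuous_const)
  -- integrability of the weight
  have hc : 0 < min 1 (4 * lam ^ 2) := lt_min one_pos (by positivity)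
  have hw_int : Integrable w := by
    have hdim : ((Module.finrank ℝ (ES m) : ℝ)) < 2 * p := by
      rw [finrank_euclideanSpace_fin, hp]
      push_cast
      linarith
    have hint := (integrable_one_add_norm (E := ES m) (μ := volume) hdim).const_mul
      ((min 1 (4 * lam ^ 2) / 2) ^ (-p))
    refine hint.mono' hw_cont.aestronglyMeasurable (Filter.Eventually.of_forall fun t => ?_)
    have h1 : min 1 (4 * lam ^ 2) / 2 * (1 + ‖t‖) ^ 2 ≤ ‖t‖ ^ 2 + 4 * lam ^ 2 := by
      have h2 := min_le_left (1 : ℝ) (4 * lam ^ 2)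
      have h3 := min_le_right (1 : ℝ) (4 * lam ^ 2)
      nlinarith [norm_nonneg t, sq_nonneg (1 - ‖t‖), hc]
    have hpos1 : (0 : ℝ) < 1 + ‖t‖ := by positivity
    have hstep : w t ≤ (min 1 (4 * lam ^ 2) / 2) ^ (-p) * (1 + ‖t‖) ^ (-(2 * p)) := by
      calc w t ≤ (min 1 (4 * lam ^ 2) / 2 * (1 + ‖t‖) ^ 2) ^ (-p) :=
            Real.rpow_le_rpow_of_nonpos (by positivity) h1 (by linarith)
        _ = (min 1 (4 * lam ^ 2) / 2) ^ (-p) * (1 + ‖t‖) ^ (-(2 * p)) := by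
            rw [Real.mul_rpow (by positivity) (by positivity), ← Real.rpow_natCast (1 + ‖t‖) 2,
              ← Real.rpow_mul hpos1.le]
            congr 1
            push_cast
            ring_nf
    rw [Real.norm_eq_abs, abs_of_pos (Real.rpow_pos_of_pos (hbase t) _)]
    exact hstep
  have hw_nonneg : ∀ t, 0 ≤ w t := fun t => (Real.rpow_pos_of_pos (hbase t) _).le
  -- any continuous function bounded by 1 times w is integrable
  have key : ∀ f : ES m → ℝ, Continuous f → (∀ x, |f x| ≤ 1) →
      Integrable (fun t => f t * w t) := by
    intro f hf hbd
    exact hw_int.bdd_mul hf.aestronglyMeasurable (c := 1) (Filter.Eventually.of_forall fun x => by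
      rw [Real.norm_eq_abs]; exact hbd x)
  -- first integrand
  have hek_cont : Continuous (ek (m := m) k) := by
    unfold ek
    exact continuous_finset_prod _ fun i _ =>
      Real.continuous_cos.comp (continuous_const.mul (EuclideanSpace.proj (𝕜 := ℝ) i).continuous)
  have habs_ek : ∀ x : ES m, |ek k x| ≤ 1 := fun x => by
    rw [ek]; exact abs_cosprod_le_one Finset.univ _
  have hint1 : Integrable (fun t : ES m => ek k (s - t) * w t) :=
    key _ (hek_cont.comp (continuous_const.sub continuous_id)) (fun x => habs_ek _)
  have hint2 : Integrable (fun t : ES m => ek k t * w t) := key _ hek_cont habs_ek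
  refine ⟨hint1, hint2, ?_⟩
  -- the symmetrization argument
  have step : ∀ (A : Finset (Fin (m + 1))) (j : Fin (m + 1)), j ∉ A →
      ∫ t, gaux k s A t * w t = ∫ t, gaux k s (insert j A) t * w t := by
    intro A j hj
    have hIA : Integrable (fun t => gaux k s A t * w t) :=
      key _ (continuous_gaux k s A) (abs_gaux_le_one k s A)
    have hIAf : Integrable (fun t => gaux k s A (flipj j t) * w t) :=
      key _ ((continuous_gaux k s A).comp (flipj j).continuous)
        (fun x => abs_gaux_le_one k s A _)
    have hwflip : ∀ t, w (flipj j t) = w t := by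
      intro t; simp only [hw, (flipj j).norm_map]
    have hflip_int : ∫ t, gaux k s A (flipj j t) * w t = ∫ t, gaux k s A t * w t := by
      calc ∫ t, gaux k s A (flipj j t) * w t
          = ∫ t, gaux k s A (flipj j t) * w (flipj j t) := by
            congr 1; ext t; rw [hwflip]
        _ = ∫ t, gaux k s A t * w t :=
            MeasureTheory.integral_comp (flipj j) (fun t => gaux k s A t * w t)
    have h2 : (2 : ℝ) * ∫ t, gaux k s (insert j A) t * w t
        = 2 * ∫ t, gaux k s A t * w t := by
      calc (2 : ℝ) * ∫ t, gaux k s (insert j A) t * w t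
          = ∫ t, (gaux k s A t * w t + gaux k s A (flipj j t) * w t) := by
            rw [← integral_const_mul]
            congr 1; ext t
            rw [← add_mul, gaux_flip_add k s hj t]; ring
        _ = (∫ t, gaux k s A t * w t) + ∫ t, gaux k s A (flipj j t) * w t :=
            integral_add hIA hIAf
        _ = 2 * ∫ t, gaux k s A t * w t := by rw [hflip_int]; ring
    linarith
  have main : ∀ A : Finset (Fin (m + 1)),
      ∫ t, gaux k s (∅ : Finset (Fin (m + 1))) t * w t = ∫ t, gaux k s A t * w t := by
    intro A
    induction A using Finset.induction_on with
    | empty => rfl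
    | insert _ _ hj ih => rw [ih, step _ _ hj]
  have hempty : ∀ t : ES m, gaux k s (∅ : Finset (Fin (m + 1))) t = ek k (s - t) := by
    intro t
    rw [gaux, ek, Finset.prod_empty, one_mul, Finset.compl_empty]
    refine Finset.prod_congr rfl fun i _ => ?_
    simp [PiLp.sub_apply]
  have huniv : ∀ t : ES m, gaux k s (Finset.univ : Finset (Fin (m + 1))) t
      = ek k s * ek k t := by
    intro t
    rw [gaux, Finset.compl_univ, Finset.prod_empty, mul_one, ek, ek, Finset.prod_mul_distrib]
  calc ∫ t : ES m, ek k (s - t) * w t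
      = ∫ t, gaux k s (∅ : Finset (Fin (m + 1))) t * w t := by
        congr 1; ext t; rw [hempty]
    _ = ∫ t, gaux k s (Finset.univ : Finset (Fin (m + 1))) t * w t := main _
    _ = ∫ t, ek k s * (ek k t * w t) := by
        congr 1; ext t; rw [huniv]; ring
    _ = ek k s * ∫ t, ek k t * w t := integral_const_mul _ _
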